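/- (Lemma: ⇝*_{H,G} is a causal order) Consider any history Ĥ produced by an execution of Algorithm 2 over Algorithm 1, and let ⇝_H be the causal order built from process orders and read-from links. Extend ⇝_H by adding a ww link w_p(X,v) → w_q(Y,w) for every pair of write operations by processes p and q that are neighbors in the proximity graph G, that are unordered in ⇝_H, and whose broadcast WRITE messages are toco-delivered in that order by all processes, and let ⇝*_{H,G} be the transitive closure of the result. Then ⇝*_{H,G} is acyclic, totally orders the write operations of every pair of G-neighboring processes, and remains a causal order: no read in Ĥ returns an overwritten value with respect to ⇝*_{H,G}. -/

import Mathlib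

/-!
Model of Algorithm 2 (the fast-read register algorithm) running on top of an
abstract `G`-fisheye (SC,CC)-broadcast.

Processes (type `P`) interact through shared read/write registers (type `X`)
holding values of type `V`; the initial value of every register is `⊥`
(modelled by `Option V`, with `none = ⊥`).  `X.write(v)` at `p` toco-broadcasts
`WRITE(X,v,p)` and waits until this message is toco-delivered at `p`;
`X.read()` at `p` returns the local copy of `X`; upon toco-delivery of
`WRITE(X,v,q)` at `p`, the local copy of `X` at `p` is set to `v`.  Following
the paper, all written values are assumed distinct, so a `WRITE` message is
identified by the (process, register, value) triple it carries.
-/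

namespace FisheyeReg

/-- Events of an execution of Algorithm 2: `invWrite p x v` is the invocation
of `X.write(v)` by `p` (which toco-broadcasts `WRITE(x,v,p)`); `read p x v` is
a (complete) read of register `x` by `p` returning `v`; `deliver p q x v` is
the toco-delivery at `p` of the message `WRITE(x,v,q)`. -/
inductive AEvent (P X V : Type) where
  | invWrite (p : P) (x : X) (v : V)
  | read (p : P) (x : X) (v : Option V)
  | deliver (p : P) (q : P) (x : X) (v : V)

variable {P X V : Type}

/-- The message `WRITE(x,v,q)` is toco-broadcast at time `t`. -/
def bAt (f : ℕ → Option (AEvent P X V)) (q : P) (x : X) (v : V) (t : ℕ) : Prop :=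
  f t = some (.invWrite q x v)

/-- The message `WRITE(x,v,q)` is toco-delivered at process `p` at time `t`. -/
def dAt (f : ℕ → Option (AEvent P X V)) (p q : P) (x : X) (v : V) (t : ℕ) : Prop :=
  f t = some (.deliver p q x v)

/-- The message causal order `⇝_M` on `WRITE` messages (identified by the
triples `(sender, register, value)`). -/
inductive MCausal (f : ℕ → Option (AEvent P X V)) : P × X × V → P × X × V → Prop
  | sameProc {q : P} {x1 x2 : X} {v1 v2 : V} {t1 t2 : ℕ} :
      t1 < t2 → bAt f q x1 v1 t1 → bAt f q x2 v2 t2 →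
      MCausal f (q, x1, v1) (q, x2, v2)
  | delivered {p q : P} {x1 x2 : X} {v1 v2 : V} {t1 t2 : ℕ} :
      t1 < t2 → dAt f p q x1 v1 t1 → bAt f p x2 v2 t2 →
      MCausal f (q, x1, v1) (p, x2, v2)
  | trans {a b c : P × X × V} : MCausal f a b → MCausal f b c → MCausal f a c

/-- An execution of Algorithm 2 over a `G`-fisheye (SC,CC)-broadcast.  `ev` is
the global trace of events (at most one per instant), `val t p x` is the local
copy of register `x` at process `p` at time `t`.  The fields state: the local
copies start at `⊥` and are updated exactly by deliveries of `WRITE` messages;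
reads return the current local copy; all written values are distinct; the
underlying broadcast satisfies Validity, Integrity, Causal order, `G`-delivery
order and Termination; and a writer blocks (performs no other operation) until
its own `WRITE` message is toco-delivered locally. -/
structure Exec (P X V : Type) (G : SimpleGraph P) where
  ev : ℕ → Option (AEvent P X V)
  val : ℕ → P → X → Option V
  val0 : ∀ (p : P) (x : X), val 0 p x = none
  valDeliv : ∀ (t : ℕ) (p q : P) (x : X) (v : V),
    ev t = some (.deliver p q x v) → val (t + 1) p x = some v
  valFrame : ∀ (t : ℕ) (p : P) (x : X),
    (¬ ∃ (q : P) (v : V), ev t = some (.deliver p q x v)) → val (t + 1) p x = val t p x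
  readsLocal : ∀ (t : ℕ) (p : P) (x : X) (v : Option V),
    ev t = some (.read p x v) → v = val t p x
  distinctValues : ∀ (t t' : ℕ) (p p' : P) (x x' : X) (v : V),
    bAt ev p x v t → bAt ev p' x' v t' → t = t'
  validity : ∀ (t : ℕ) (p q : P) (x : X) (v : V),
    dAt ev p q x v t → ∃ t', bAt ev q x v t'
  integrity : ∀ (p q : P) (x : X) (v : V) (t t' : ℕ),
    dAt ev p q x v t → dAt ev p q x v t' → t = t'
  termination : ∀ (t : ℕ) (q : P) (x : X) (v : V),
    bAt ev q x v t → ∀ p : P, ∃ t', dAt ev p q x v t'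
  causalOrder : ∀ m1 m2 : P × X × V, MCausal ev m1 m2 →
    ¬ ∃ (r : P) (t1 t2 : ℕ), t1 < t2 ∧
        dAt ev r m2.1 m2.2.1 m2.2.2 t1 ∧ dAt ev r m1.1 m1.2.1 m1.2.2 t2
  gOrder : ∀ p q : P, G.Adj p q → ∀ (x x' : X) (v v' : V) (tb tb' : ℕ),
    bAt ev p x v tb → bAt ev q x' v' tb' →
    (∃ (r : P) (t1 t2 : ℕ), t1 < t2 ∧ dAt ev r p x v t1 ∧ dAt ev r q x' v' t2) →
    ¬ ∃ (r : P) (t1 t2 : ℕ), t1 < t2 ∧ dAt ev r q x' v' t1 ∧ dAt ev r p x v t2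
  blockingWrite : ∀ (t : ℕ) (p : P) (x : X) (v : V), bAt ev p x v t →
    ∃ td, t < td ∧ dAt ev p p x v td ∧
      ∀ s, t < s → s < td →
        (∀ (x' : X) (v' : V), ev s ≠ some (.invWrite p x' v')) ∧
        (∀ (x' : X) (v' : Option V), ev s ≠ some (.read p x' v'))

/-- Operation at time `t` is a read by `p` of register `x` returning `v`. -/
def isReadAt (f : ℕ → Option (AEvent P X V)) (t : ℕ) (p : P) (x : X) (v : Option V) : Prop :=
  f t = some (.read p x v)

/-- Operation at time `t` is a write by `p` of value `v` to register `x`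
(identified with its invocation event). -/
def isWriteAt (f : ℕ → Option (AEvent P X V)) (t : ℕ) (p : P) (x : X) (v : V) : Prop :=
  f t = some (.invWrite p x v)

/-- Time `t` carries an operation (read or write) of process `p`. -/
def isOpOf (f : ℕ → Option (AEvent P X V)) (t : ℕ) (p : P) : Prop :=
  (∃ (x : X) (v : Option V), isReadAt f t p x v) ∨ (∃ (x : X) (v : V), isWriteAt f t p x v)

/-- Time `t` carries a write operation. -/
def isWrite (f : ℕ → Option (AEvent P X V)) (t : ℕ) : Prop :=
  ∃ (p : P) (x : X) (v : V), isWriteAt f t p x v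

/-- Process order: two operations of the same process, in temporal order. -/
def procOrder (f : ℕ → Option (AEvent P X V)) (a b : ℕ) : Prop :=
  a < b ∧ ∃ p : P, isOpOf f a p ∧ isOpOf f b p

/-- Read-from links: the read at time `r` returns the value `v` written by the
write at time `w` (values being distinct, the write is unique). -/
def readFrom (f : ℕ → Option (AEvent P X V)) (w r : ℕ) : Prop :=
  ∃ (q p : P) (x : X) (v : V), isWriteAt f w q x v ∧ isReadAt f r p x (some v)

/-- The causal order `⇝_H` on operations: the transitive closure of the union
of the process orders and the read-from links. -/
def causalH (f : ℕ → Option (AEvent P X V)) : ℕ → ℕ → Prop :=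
  Relation.TransGen (fun a b => procOrder f a b ∨ readFrom f a b)

/-- `r` is a causal order for the history of the trace `f`: a strict partial
order extending the process orders, in which every read of a register returns
the value of a `r`-latest write to that register preceding it (or `⊥` if no
write to it precedes it), i.e., no read returns an overwritten value. -/
def IsCausalOrderTrace (f : ℕ → Option (AEvent P X V)) (r : ℕ → ℕ → Prop) : Prop :=
  (∀ a, ¬ r a a) ∧
  (∀ a b c, r a b → r b c → r a c) ∧
  (∀ a b, procOrder f a b → r a b) ∧
  (∀ (t : ℕ) (p : P) (x : X) (v : V), isReadAt f t p x (some v) →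
    ∃ (w : ℕ) (q : P), isWriteAt f w q x v ∧ r w t ∧
      ¬ ∃ (w' : ℕ) (q' : P) (v' : V), isWriteAt f w' q' x v' ∧ r w w' ∧ r w' t) ∧
  (∀ (t : ℕ) (p : P) (x : X), isReadAt f t p x none →
    ¬ ∃ (w : ℕ) (q : P) (v : V), isWriteAt f w q x v ∧ r w t)

end FisheyeReg

namespace FisheyeReg

/-- `ww` links: two write operations by processes that are neighbors in the
proximity graph `G`, unordered in `⇝_H`, whose `WRITE` messages are
toco-delivered in that order by all processes. -/
def wwLink {P X V : Type} (G : SimpleGraph P) (f : ℕ → Option (AEvent P X V))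
    (a b : ℕ) : Prop :=
  ∃ (p q : P) (x x' : X) (v v' : V),
    isWriteAt f a p x v ∧ isWriteAt f b q x' v' ∧ G.Adj p q ∧
    ¬ causalH f a b ∧ ¬ causalH f b a ∧
    ∀ (r : P) (t1 t2 : ℕ), dAt f r p x v t1 → dAt f r q x' v' t2 → t1 < t2

/-- The order `⇝*_{H,G}`: the transitive closure of the process orders, the
read-from links, and the `ww` links. -/
def causalHG {P X V : Type} (G : SimpleGraph P) (f : ℕ → Option (AEvent P X V)) :
    ℕ → ℕ → Prop :=
  Relation.TransGen (fun a b => procOrder f a b ∨ readFrom f a b ∨ wwLink G f a b)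


section Aux

variable {P X V : Type} {G : SimpleGraph P}

/-- Messages are identified by (sender, register, value) triples. -/
abbrev Msg (P X V : Type) := P × X × V

/-- Message `m` is toco-broadcast at time `t`. -/
def bM (f : ℕ → Option (AEvent P X V)) (m : Msg P X V) (t : ℕ) : Prop :=
  bAt f m.1 m.2.1 m.2.2 t

/-- Message `m` is toco-delivered at `r` at time `t`. -/
def dM (f : ℕ → Option (AEvent P X V)) (r : P) (m : Msg P X V) (t : ℕ) : Prop :=
  dAt f r m.1 m.2.1 m.2.2 t

/-- Message `m` is broadcast at some time. -/
def Bc (f : ℕ → Option (AEvent P X V)) (m : Msg P X V) : Prop := ∃ t, bM f m t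

/-- `m` is strictly delivered before `m'` at every process. -/
def SDB (f : ℕ → Option (AEvent P X V)) (m m' : Msg P X V) : Prop :=
  Bc f m ∧ Bc f m' ∧ ∀ (r : P) (t1 t2 : ℕ), dM f r m t1 → dM f r m' t2 → t1 < t2

theorem ev_eq {f : ℕ → Option (AEvent P X V)} {t : ℕ} {e1 e2 : AEvent P X V}
    (h1 : f t = some e1) (h2 : f t = some e2) : e1 = e2 := by
  rw [h1] at h2; exact Option.some.inj h2

theorem bcast_unique (E : Exec P X V G) {q q' : P} {x x' : X} {v : V} {t t' : ℕ}
    (h : bAt E.ev q x v t) (h' : bAt E.ev q' x' v t') :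
    q = q' ∧ x = x' ∧ t = t' := by
  have ht := E.distinctValues t t' q q' x x' v h h'
  subst ht
  have he := ev_eq h h'
  simp only [AEvent.invWrite.injEq] at he
  exact ⟨he.1, he.2.1, rfl⟩

theorem msg_ne (E : Exec P X V G) {a b : ℕ} {pa pb : P} {xa xb : X} {va vb : V}
    (hab : a ≠ b) (ha : bAt E.ev pa xa va a) (hb : bAt E.ev pb xb vb b) :
    (⟨pa, xa, va⟩ : Msg P X V) ≠ ⟨pb, xb, vb⟩ := by
  intro h
  simp only [Prod.mk.injEq] at h
  obtain ⟨h1, h2, h3⟩ := h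
  subst h3
  exact hab (E.distinctValues a b pa pb xa xb va ha hb)

/-- At the sender, the delivery of its own message is strictly after broadcast. -/
theorem self_deliv_gt (E : Exec P X V G) {p : P} {x : X} {v : V} {t s : ℕ}
    (hb : bAt E.ev p x v t) (hd : dAt E.ev p p x v s) : t < s := by
  obtain ⟨td, htd, hdtd, _⟩ := E.blockingWrite t p x v hb
  have : s = td := E.integrity p p x v s td hd hdtd
  omega

theorem own_deliv_before_next (E : Exec P X V G) {a b : ℕ} {p : P} {x : X} {v : V}
    (ha : bAt E.ev p x v a) (hb : isOpOf E.ev b p) (hab : a < b) :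
    ∃ s, s < b ∧ dAt E.ev p p x v s := by
  obtain ⟨td, h1, h2, h3⟩ := E.blockingWrite a p x v ha
  refine ⟨td, ?_, h2⟩
  rcases lt_trichotomy b td with h | h | h
  · exfalso
    obtain ⟨hw, hr⟩ := h3 b hab h
    rcases hb with ⟨x', vv, hev⟩ | ⟨x', v', hev⟩
    · exact hr x' vv hev
    · exact hw x' v' hev
  · exfalso
    subst h
    rcases hb with ⟨x', vv, hev⟩ | ⟨x', v', hev⟩ <;>
      · have := ev_eq hev h2; simp at this
  · exact h

theorem mcausal_sdb (E : Exec P X V G) {m m' : Msg P X V} (h : MCausal E.ev m m')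
    (hne : m ≠ m') (hb : Bc E.ev m) (hb' : Bc E.ev m') : SDB E.ev m m' := by
  refine ⟨hb, hb', ?_⟩
  intro r t1 t2 h1 h2
  have hno := E.causalOrder m m' h
  rcases lt_trichotomy t1 t2 with hlt | heq | hgt
  · exact hlt
  · exfalso
    subst heq
    obtain ⟨q, x, v⟩ := m
    obtain ⟨q', x', v'⟩ := m'
    have := ev_eq h1 h2
    simp only [AEvent.deliver.injEq] at this
    exact hne (by simp [this.1, this.2.1, this.2.2])
  · exact absurd ⟨r, t2, t1, hgt, h2, h1⟩ hno

theorem sdb_trans (E : Exec P X V G) {m1 m2 m3 : Msg P X V}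
    (h : SDB E.ev m1 m2) (h' : SDB E.ev m2 m3) : SDB E.ev m1 m3 := by
  refine ⟨h.1, h'.2.1, ?_⟩
  intro r t1 t3 h1 h3
  obtain ⟨t, hbt⟩ := h.2.1
  obtain ⟨t2, hd2⟩ := E.termination t m2.1 m2.2.1 m2.2.2 hbt r
  exact lt_trans (h.2.2 r t1 t2 h1 hd2) (h'.2.2 r t2 t3 hd2 h3)

open Classical in
/-- Delivery time of `m` at a reference process `r₀` (junk if never delivered). -/
noncomputable def Dt (E : Exec P X V G) (r₀ : P) (m : Msg P X V) : ℕ :=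
  if h : ∃ t, dM E.ev r₀ m t then h.choose else 0

theorem Dt_spec (E : Exec P X V G) (r₀ : P) {m : Msg P X V} (hb : Bc E.ev m) :
    dM E.ev r₀ m (Dt E r₀ m) := by
  obtain ⟨t, hbt⟩ := hb
  have h : ∃ s, dM E.ev r₀ m s := E.termination t m.1 m.2.1 m.2.2 hbt r₀
  rw [Dt, dif_pos h]
  exact h.choose_spec

theorem sdb_Dt (E : Exec P X V G) (r₀ : P) {m m' : Msg P X V} (h : SDB E.ev m m') :
    Dt E r₀ m < Dt E r₀ m' :=
  h.2.2 r₀ _ _ (Dt_spec E r₀ h.1) (Dt_spec E r₀ h.2.1)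

open Classical in
/-- Timestamp of past deliveries at `p`, for the read measure. -/
noncomputable def dval (E : Exec P X V G) (r₀ p : P) (s : ℕ) : ℕ :=
  match E.ev s with
  | some (.deliver p' q x v) => if p' = p then Dt E r₀ (q, x, v) + 1 else 0
  | _ => 0

/-- The primary measure on operations. -/
noncomputable def gg (E : Exec P X V G) (r₀ : P) (t : ℕ) : ℕ :=
  match E.ev t with
  | some (.invWrite p x v) => Dt E r₀ (p, x, v) + 1
  | some (.read p _ _) => (Finset.range t).sup (dval E r₀ p)
  | _ => 0

/-- The secondary measure (reads after writes at equal primary measure). -/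
def rr : Option (AEvent P X V) → ℕ
  | some (.read _ _ _) => 1
  | _ => 0

theorem gg_write (E : Exec P X V G) (r₀ : P) {t : ℕ} {p : P} {x : X} {v : V}
    (h : E.ev t = some (.invWrite p x v)) : gg E r₀ t = Dt E r₀ (p, x, v) + 1 := by
  unfold gg; rw [h]

theorem gg_read (E : Exec P X V G) (r₀ : P) {t : ℕ} {p : P} {x : X} {vv : Option V}
    (h : E.ev t = some (.read p x vv)) :
    gg E r₀ t = (Finset.range t).sup (dval E r₀ p) := by
  unfold gg; rw [h]

theorem rr_write {f : ℕ → Option (AEvent P X V)} {t : ℕ} {p : P} {x : X} {v : V}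
    (h : f t = some (.invWrite p x v)) : rr (f t) = 0 := by rw [h]; rfl

theorem rr_read {f : ℕ → Option (AEvent P X V)} {t : ℕ} {p : P} {x : X} {vv : Option V}
    (h : f t = some (.read p x vv)) : rr (f t) = 1 := by rw [h]; rfl

theorem dval_deliver (E : Exec P X V G) (r₀ : P) {s : ℕ} {p q : P} {x : X} {v : V}
    (h : E.ev s = some (.deliver p q x v)) : dval E r₀ p s = Dt E r₀ (q, x, v) + 1 := by
  unfold dval; rw [h]; simp

theorem dval_cases (E : Exec P X V G) (r₀ p : P) (s : ℕ) :
    dval E r₀ p s = 0 ∨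
      ∃ (q : P) (x : X) (v : V), E.ev s = some (.deliver p q x v) ∧
        dval E r₀ p s = Dt E r₀ (q, x, v) + 1 := by
  unfold dval
  rcases hs : E.ev s with _ | e
  · exact Or.inl rfl
  · cases e with
    | invWrite p' x v => exact Or.inl rfl
    | read p' x v => exact Or.inl rfl
    | deliver p' q x v =>
      by_cases hp : p' = p
      · subst hp; exact Or.inr ⟨q, x, v, rfl, by simp⟩
      · simp [hp]

/-- Lower bound for the read measure: every message delivered locally before the read. -/
theorem le_gg_read (E : Exec P X V G) (r₀ : P) {t s : ℕ} {p q' : P} {x : X}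
    {vv : Option V} {x' : X} {v' : V}
    (ht : E.ev t = some (.read p x vv)) (hs : s < t) (hd : dAt E.ev p q' x' v' s) :
    Dt E r₀ (q', x', v') + 1 ≤ gg E r₀ t := by
  rw [gg_read E r₀ ht]
  have := Finset.le_sup (f := dval E r₀ p) (Finset.mem_range.2 hs)
  rwa [dval_deliver E r₀ hd] at this

/-- Strict upper bound for a read followed by a write by the same process. -/
theorem gg_read_lt (E : Exec P X V G) (r₀ : P) {a b : ℕ} {p : P} {x x' : X}
    {vv : Option V} {v' : V}
    (ha : E.ev a = some (.read p x vv)) (hb : bAt E.ev p x' v' b) (hab : a ≤ b) :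
    gg E r₀ a < Dt E r₀ (p, x', v') + 1 := by
  rw [gg_read E r₀ ha]
  rw [Finset.sup_lt_iff (by simp only [Nat.bot_eq_zero]; omega :
    (⊥ : ℕ) < Dt E r₀ (p, x', v') + 1)]
  intro s hs
  rw [Finset.mem_range] at hs
  rcases dval_cases E r₀ p s with h0 | ⟨q, x2, v2, hev, hval⟩
  · omega
  · rw [hval]
    have hsb : s < b := lt_of_lt_of_le hs hab
    have hne : (⟨q, x2, v2⟩ : Msg P X V) ≠ ⟨p, x', v'⟩ := by
      intro h
      simp only [Prod.mk.injEq] at h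
      obtain ⟨h1, h2, h3⟩ := h
      subst h1; subst h2; subst h3
      exact absurd (self_deliv_gt E hb hev) (by omega)
    have hmc : MCausal E.ev (q, x2, v2) (p, x', v') := MCausal.delivered hsb hev hb
    have hsdb : SDB E.ev (q, x2, v2) (p, x', v') :=
      mcausal_sdb E hmc hne (E.validity s p q x2 v2 hev) ⟨b, hb⟩
    have := sdb_Dt E r₀ hsdb
    omega

theorem gg_read_mono (E : Exec P X V G) (r₀ : P) {a b : ℕ} {p : P} {x x' : X}
    {vv vv' : Option V}
    (ha : E.ev a = some (.read p x vv)) (hb : E.ev b = some (.read p x' vv'))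
    (hab : a ≤ b) : gg E r₀ a ≤ gg E r₀ b := by
  rw [gg_read E r₀ ha, gg_read E r₀ hb]
  exact Finset.sup_mono (Finset.range_subset_range.2 hab)

/-- The lexicographic measure order. -/
def lt3 (E : Exec P X V G) (r₀ : P) (a b : ℕ) : Prop :=
  gg E r₀ a < gg E r₀ b ∨ (gg E r₀ a = gg E r₀ b ∧
    (rr (E.ev a) < rr (E.ev b) ∨ (rr (E.ev a) = rr (E.ev b) ∧ a < b)))

theorem lt3_trans (E : Exec P X V G) (r₀ : P) {a b c : ℕ}
    (h1 : lt3 E r₀ a b) (h2 : lt3 E r₀ b c) : lt3 E r₀ a c := by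
  unfold lt3 at *; omega

theorem lt3_irrefl (E : Exec P X V G) (r₀ : P) (a : ℕ) : ¬ lt3 E r₀ a a := by
  unfold lt3; omega

theorem lt3_of_le (E : Exec P X V G) (r₀ : P) {a b : ℕ}
    (h1 : gg E r₀ a ≤ gg E r₀ b)
    (h2 : rr (E.ev a) < rr (E.ev b) ∨ (rr (E.ev a) = rr (E.ev b) ∧ a < b)) :
    lt3 E r₀ a b := by
  unfold lt3; omega

end Aux
section Aux2

variable {P X V : Type} {G : SimpleGraph P}

/-- A non-⊥ local value comes from a latest delivery to that register. -/
theorem valSome (E : Exec P X V G) :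
    ∀ (t : ℕ) (p : P) (x : X) (v : V), E.val t p x = some v →
      ∃ s q, s < t ∧ E.ev s = some (.deliver p q x v) ∧
        ∀ s' q' v', s < s' → s' < t → E.ev s' ≠ some (.deliver p q' x v') := by
  intro t
  induction t with
  | zero => intro p x v h; rw [E.val0] at h; simp at h
  | succ n ih =>
    intro p x v h
    by_cases hd : ∃ q w, E.ev n = some (.deliver p q x w)
    · obtain ⟨q, w, hq⟩ := hd
      have hv := E.valDeliv n p q x w hq
      rw [h] at hv
      have hwv : w = v := by simpa using hv.symm
      subst hwv
      exact ⟨n, q, n.lt_succ_self, hq, fun s' q' v' h1 h2 => by omega⟩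
    · have hfr := E.valFrame n p x hd
      rw [hfr] at h
      obtain ⟨s, q, hs, hev, hlast⟩ := ih p x v h
      refine ⟨s, q, hs.trans n.lt_succ_self, hev, ?_⟩
      intro s' q' v' h1 h2
      rcases Nat.lt_succ_iff_lt_or_eq.1 h2 with h2' | rfl
      · exact hlast s' q' v' h1 h2'
      · intro hc; exact hd ⟨q', v', hc⟩

theorem val_isSome_mono (E : Exec P X V G) {p : P} {x : X} :
    ∀ (t' t : ℕ), t ≤ t' → (E.val t p x).isSome → (E.val t' p x).isSome := by
  intro t'
  induction t' with
  | zero => intro t h hs; rw [Nat.le_zero.1 h] at hs; exact hs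
  | succ n ih =>
    intro t h hs
    by_cases he : t = n + 1
    · rw [← he]; exact hs
    · have hn := ih t (by omega) hs
      by_cases hd : ∃ q v, E.ev n = some (.deliver p q x v)
      · obtain ⟨q, v, hq⟩ := hd
        rw [E.valDeliv n p q x v hq]; rfl
      · rw [E.valFrame n p x hd]; exact hn

/-- `m` is "known" before/at operation `t`. -/
def Known (E : Exec P X V G) (m : Msg P X V) (t : ℕ) : Prop :=
  (∃ (p : P) (x : X) (vv : Option V), E.ev t = some (.read p x vv) ∧
      ∃ s, s < t ∧ dM E.ev p m s) ∨
  (∃ (p : P) (x : X) (v : V), E.ev t = some (.invWrite p x v) ∧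
      (m = (p, x, v) ∨ SDB E.ev m (p, x, v)))

/-- A message delivered at `p` strictly before `p` broadcasts `m'` is causally
before `m'`, hence delivered everywhere before it (or equal, which is impossible). -/
theorem known_of_deliv_before_bcast (E : Exec P X V G) {m : Msg P X V} {p : P}
    {x' : X} {v' : V} {s b : ℕ}
    (hd : dM E.ev p m s) (hb : bAt E.ev p x' v' b) (hsb : s < b) :
    m = (p, x', v') ∨ SDB E.ev m (p, x', v') := by
  by_cases heq : m = (p, x', v')
  · exact Or.inl heq
  · refine Or.inr (mcausal_sdb E ?_ heq (E.validity s p m.1 m.2.1 m.2.2 hd) ⟨b, hb⟩)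
    obtain ⟨q, x0, v0⟩ := m
    exact MCausal.delivered hsb hd hb

/-- If the write of `m_a` is "known" at a write op `b` of `p`, every process
delivers it before `p`'s own message; in particular `p` itself before `b`'s
local delivery, hence strictly before any later op of `p`. -/
theorem known_deliv_at (E : Exec P X V G) {m : Msg P X V} {b : ℕ} {p : P} {x : X} {v : V}
    (hb : bAt E.ev p x v b) (hk : m = (p, x, v) ∨ SDB E.ev m (p, x, v))
    {c : ℕ} (hc : isOpOf E.ev c p) (hbc : b < c) :
    ∃ s, s < c ∧ dM E.ev p m s := by
  obtain ⟨td, htd, hdtd⟩ := own_deliv_before_next E hb hc hbc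
  rcases hk with rfl | hsdb
  · exact ⟨td, htd, hdtd⟩
  · obtain ⟨t0, hb0⟩ := hsdb.1
    obtain ⟨s, hds⟩ := E.termination t0 m.1 m.2.1 m.2.2 hb0 p
    have : s < td := hsdb.2.2 p s td hds hdtd
    exact ⟨s, by omega, hds⟩

/-- One step of the extended causal relation preserves knowledge. -/
theorem known_step (E : Exec P X V G) {a b : ℕ} {m : Msg P X V}
    (h : procOrder E.ev a b ∨ readFrom E.ev a b ∨ wwLink G E.ev a b)
    (hk : Known E m a) : Known E m b := by
  rcases h with ⟨hab, p, hpa, hpb⟩ | ⟨q, p, x, v, hw, hr⟩ |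
    ⟨pa, pb, xa, xb, va, vb, hwa, hwb, _, _, _, hord⟩
  · -- process order: cases on the kind of a
    rcases hpa with ⟨x1, vv1, ha⟩ | ⟨x1, v1, ha⟩
    · -- a is a read by p
      obtain ⟨s, hs, hds⟩ : ∃ s, s < a ∧ dM E.ev p m s := by
        rcases hk with ⟨p', x', vv', ha', s, hs, hds⟩ | ⟨p', x', v', ha', _⟩
        · rw [ha] at ha'
          simp only [Option.some.injEq, AEvent.read.injEq] at ha'
          obtain ⟨rfl, rfl, rfl⟩ := ha'
          exact ⟨s, hs, hds⟩
        · rw [ha] at ha'; simp at ha'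
      rcases hpb with ⟨x2, vv2, hbev⟩ | ⟨x2, v2, hbev⟩
      · exact Or.inl ⟨p, x2, vv2, hbev, s, by omega, hds⟩
      · exact Or.inr ⟨p, x2, v2, hbev,
          known_of_deliv_before_bcast E hds hbev (by omega)⟩
    · -- a is a write by p of (p, x1, v1)
      have hk' : m = (p, x1, v1) ∨ SDB E.ev m (p, x1, v1) := by
        rcases hk with ⟨p', x', vv', ha', _⟩ | ⟨p', x', v', ha', hin⟩
        · rw [ha] at ha'; simp at ha'
        · rw [ha] at ha'
          simp only [Option.some.injEq, AEvent.invWrite.injEq] at ha'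
          obtain ⟨rfl, rfl, rfl⟩ := ha'
          exact hin
      rcases hpb with ⟨x2, vv2, hbev⟩ | ⟨x2, v2, hbev⟩
      · obtain ⟨s, hs, hds⟩ :=
          known_deliv_at E ha hk' (Or.inl ⟨x2, vv2, hbev⟩) hab
        exact Or.inl ⟨p, x2, vv2, hbev, s, hs, hds⟩
      · -- b is also a write by p
        have hne : (⟨p, x1, v1⟩ : Msg P X V) ≠ ⟨p, x2, v2⟩ :=
          msg_ne E (by omega) ha hbev
        have hsdb : SDB E.ev (p, x1, v1) (p, x2, v2) :=
          mcausal_sdb E (MCausal.sameProc hab ha hbev) hne ⟨a, ha⟩ ⟨b, hbev⟩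
        refine Or.inr ⟨p, x2, v2, hbev, Or.inr ?_⟩
        rcases hk' with rfl | h'
        · exact hsdb
        · exact sdb_trans E h' hsdb
  · -- read-from: a is the write of (q, x, v), b a read by p returning some v
    have hk' : m = (q, x, v) ∨ SDB E.ev m (q, x, v) := by
      rcases hk with ⟨p', x', vv', ha', _⟩ | ⟨p', x', v', ha', hin⟩
      · rw [hw] at ha'; simp at ha'
      · rw [hw] at ha'
        simp only [Option.some.injEq, AEvent.invWrite.injEq] at ha'
        obtain ⟨rfl, rfl, rfl⟩ := ha'
        exact hin
    have hval : E.val b p x = some v := (E.readsLocal b p x (some v) hr).symm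
    obtain ⟨s, q2, hs, hev, _⟩ := valSome E b p x v hval
    have hq2 : q2 = q ∧ x = x := by
      obtain ⟨w0, hb0⟩ := E.validity s p q2 x v hev
      obtain ⟨h1, h2, _⟩ := bcast_unique E hb0 hw
      exact ⟨h1, rfl⟩
    obtain ⟨rfl, -⟩ := hq2
    refine Or.inl ⟨p, x, some v, hr, ?_⟩
    rcases hk' with rfl | hsdb
    · exact ⟨s, hs, hev⟩
    · obtain ⟨t0, hb0⟩ := hsdb.1
      obtain ⟨s1, hds1⟩ := E.termination t0 m.1 m.2.1 m.2.2 hb0 p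
      have : s1 < s := hsdb.2.2 p s1 s hds1 hev
      exact ⟨s1, by omega, hds1⟩
  · -- ww link
    have hk' : m = (pa, xa, va) ∨ SDB E.ev m (pa, xa, va) := by
      rcases hk with ⟨p', x', vv', ha', _⟩ | ⟨p', x', v', ha', hin⟩
      · rw [hwa] at ha'; simp at ha'
      · rw [hwa] at ha'
        simp only [Option.some.injEq, AEvent.invWrite.injEq] at ha'
        obtain ⟨rfl, rfl, rfl⟩ := ha'
        exact hin
    have hsdb : SDB E.ev (pa, xa, va) (pb, xb, vb) :=
      ⟨⟨a, hwa⟩, ⟨b, hwb⟩, hord⟩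
    refine Or.inr ⟨pb, xb, vb, hwb, Or.inr ?_⟩
    rcases hk' with rfl | h'
    · exact hsdb
    · exact sdb_trans E h' hsdb

theorem hg_known (E : Exec P X V G) {a b : ℕ} {m : Msg P X V}
    (h : causalHG G E.ev a b) (hk : Known E m a) : Known E m b := by
  induction h with
  | single h' => exact known_step E h' hk
  | tail _ h' ih => exact known_step E h' ih

end Aux2
section Aux3

variable {P X V : Type} {G : SimpleGraph P}

theorem base_lt3 (E : Exec P X V G) (r₀ : P) {a b : ℕ}
    (h : procOrder E.ev a b ∨ readFrom E.ev a b ∨ wwLink G E.ev a b) :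
    lt3 E r₀ a b := by
  rcases h with ⟨hab, p, hpa, hpb⟩ | ⟨q, p, x, v, hw, hr⟩ |
    ⟨pa, pb, xa, xb, va, vb, hwa, hwb, _, _, _, hord⟩
  · rcases hpa with ⟨x1, vv1, ha⟩ | ⟨x1, v1, ha⟩
    · rcases hpb with ⟨x2, vv2, hbev⟩ | ⟨x2, v2, hbev⟩
      · -- read, read
        refine lt3_of_le E r₀ (gg_read_mono E r₀ ha hbev (le_of_lt hab)) ?_
        exact Or.inr ⟨by rw [rr_read ha, rr_read hbev], hab⟩
      · -- read, write
        left
        rw [gg_write E r₀ hbev]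
        exact gg_read_lt E r₀ ha hbev (le_of_lt hab)
    · rcases hpb with ⟨x2, vv2, hbev⟩ | ⟨x2, v2, hbev⟩
      · -- write, read
        obtain ⟨s, hs, hds⟩ :=
          own_deliv_before_next E ha (Or.inl ⟨x2, vv2, hbev⟩) hab
        have hle : gg E r₀ a ≤ gg E r₀ b := by
          rw [gg_write E r₀ ha]
          exact le_gg_read E r₀ hbev hs hds
        exact lt3_of_le E r₀ hle (Or.inl (by rw [rr_write ha, rr_read hbev]; omega))
      · -- write, write
        left
        rw [gg_write E r₀ ha, gg_write E r₀ hbev]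
        have hne : (⟨p, x1, v1⟩ : Msg P X V) ≠ ⟨p, x2, v2⟩ :=
          msg_ne E (by omega) ha hbev
        have hsdb : SDB E.ev (p, x1, v1) (p, x2, v2) :=
          mcausal_sdb E (MCausal.sameProc hab ha hbev) hne ⟨a, ha⟩ ⟨b, hbev⟩
        have := sdb_Dt E r₀ hsdb
        omega
  · -- read-from
    have hval : E.val b p x = some v := (E.readsLocal b p x (some v) hr).symm
    obtain ⟨s, q2, hs, hev, _⟩ := valSome E b p x v hval
    obtain ⟨w0, hb0⟩ := E.validity s p q2 x v hev
    obtain ⟨rfl, -, -⟩ := bcast_unique E hb0 hw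
    have hle : gg E r₀ a ≤ gg E r₀ b := by
      rw [gg_write E r₀ hw]
      exact le_gg_read E r₀ hr hs hev
    exact lt3_of_le E r₀ hle (Or.inl (by rw [rr_write hw, rr_read hr]; omega))
  · -- ww link
    left
    rw [gg_write E r₀ hwa, gg_write E r₀ hwb]
    have hsdb : SDB E.ev (pa, xa, va) (pb, xb, vb) := ⟨⟨a, hwa⟩, ⟨b, hwb⟩, hord⟩
    have := sdb_Dt E r₀ hsdb
    omega

theorem hg_lt3 (E : Exec P X V G) (r₀ : P) {a b : ℕ}
    (h : causalHG G E.ev a b) : lt3 E r₀ a b := by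
  induction h with
  | single h' => exact base_lt3 E r₀ h'
  | tail _ h' ih => exact lt3_trans E r₀ ih (base_lt3 E r₀ h')

theorem base_nonempty {f : ℕ → Option (AEvent P X V)} {a b : ℕ}
    (h : procOrder f a b ∨ readFrom f a b ∨ wwLink G f a b) : Nonempty P := by
  rcases h with ⟨_, p, _⟩ | ⟨q, _⟩ | ⟨p, _⟩
  · exact ⟨p⟩
  · exact ⟨q⟩
  · exact ⟨p⟩

theorem hg_nonempty {f : ℕ → Option (AEvent P X V)} {a b : ℕ}
    (h : causalHG G f a b) : Nonempty P := by
  induction h with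
  | single h' => exact base_nonempty h'
  | tail _ h' _ => exact base_nonempty h'

theorem hg_irrefl (E : Exec P X V G) (a : ℕ) : ¬ causalHG G E.ev a a := by
  intro h
  obtain ⟨r₀⟩ := hg_nonempty h
  exact lt3_irrefl E r₀ a (hg_lt3 E r₀ h)

theorem causalH_sub {f : ℕ → Option (AEvent P X V)} {a b : ℕ}
    (h : causalH f a b) : causalHG G f a b :=
  Relation.TransGen.lift (p := fun a b => procOrder f a b ∨ readFrom f a b ∨ wwLink G f a b) id
    (fun x y (h' : procOrder f x y ∨ readFrom f x y) => Or.imp id Or.inl h') _ _ h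

/-- Writes by `G`-adjacent distinct processes are `causalHG`-comparable. -/
theorem cross_writes (E : Exec P X V G) {pa pb : P} {xa xb : X} {va vb : V} {a b : ℕ}
    (adj : G.Adj pa pb) (hne : a ≠ b)
    (hwa : isWriteAt E.ev a pa xa va) (hwb : isWriteAt E.ev b pb xb vb) :
    causalHG G E.ev a b ∨ causalHG G E.ev b a := by
  by_cases h1 : causalH E.ev a b
  · exact Or.inl (causalH_sub h1)
  by_cases h2 : causalH E.ev b a
  · exact Or.inr (causalH_sub h2)
  have key : (∀ (r : P) (t1 t2 : ℕ), dAt E.ev r pa xa va t1 → dAt E.ev r pb xb vb t2 → t1 < t2) ∨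
      (∀ (r : P) (t1 t2 : ℕ), dAt E.ev r pb xb vb t1 → dAt E.ev r pa xa va t2 → t1 < t2) := by
    by_contra hc
    push_neg at hc
    obtain ⟨⟨r, t1, t2, hd1, hd2, hle⟩, ⟨r', s1, s2, hd1', hd2', hle'⟩⟩ := hc
    have hmne := msg_ne E hne hwa hwb
    have ht : t2 < t1 := by
      rcases lt_or_eq_of_le hle with h | h
      · exact h
      · exfalso
        subst h
        have := ev_eq hd2 hd1
        simp only [AEvent.deliver.injEq] at this
        exact hmne (by simp [this.1, this.2.1, this.2.2])
    have hs : s2 < s1 := by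
      rcases lt_or_eq_of_le hle' with h | h
      · exact h
      · exfalso
        subst h
        have := ev_eq hd2' hd1'
        simp only [AEvent.deliver.injEq] at this
        exact hmne (by simp [this.1, this.2.1, this.2.2])
    exact (E.gOrder pa pb adj xa xb va vb a b hwa hwb
      ⟨r', s2, s1, hs, hd2', hd1'⟩) ⟨r, t2, t1, ht, hd2, hd1⟩
  rcases key with k | k
  · exact Or.inl (Relation.TransGen.single (Or.inr (Or.inr
      ⟨pa, pb, xa, xb, va, vb, hwa, hwb, adj, h1, h2, k⟩)))
  · exact Or.inr (Relation.TransGen.single (Or.inr (Or.inr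
      ⟨pb, pa, xb, xa, vb, va, hwb, hwa, adj.symm, h2, h1, k⟩)))

theorem same_writer (E : Exec P X V G) {p : P} {xa xb : X} {va vb : V} {a b : ℕ}
    (hne : a ≠ b)
    (hwa : isWriteAt E.ev a p xa va) (hwb : isWriteAt E.ev b p xb vb) :
    causalHG G E.ev a b ∨ causalHG G E.ev b a := by
  rcases Nat.lt_or_ge a b with h | h
  · exact Or.inl (Relation.TransGen.single (Or.inl
      ⟨h, p, Or.inr ⟨xa, va, hwa⟩, Or.inr ⟨xb, vb, hwb⟩⟩))
  · have h' : b < a := by omega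
    exact Or.inr (Relation.TransGen.single (Or.inl
      ⟨h', p, Or.inr ⟨xb, vb, hwb⟩, Or.inr ⟨xa, va, hwa⟩⟩))

end Aux3
/-- **Lemma: `⇝*_{H,G}` is a causal order.**  For any history produced by an
execution of Algorithm 2 over Algorithm 1, the extension `⇝*_{H,G}` of `⇝_H`
by the `ww` links is acyclic, totally orders the write operations of every
pair of `G`-neighboring processes, and remains a causal order: no read returns
an overwritten value with respect to `⇝*_{H,G}`. -/
theorem causalHG_is_causal_order {P X V : Type} {G : SimpleGraph P}
    (E : Exec P X V G) :
    IsCausalOrderTrace E.ev (causalHG G E.ev) ∧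
    (∀ p q : P, G.Adj p q → ∀ a b : ℕ, a ≠ b →
      (∃ (x : X) (v : V), isWriteAt E.ev a p x v ∨ isWriteAt E.ev a q x v) →
      (∃ (x : X) (v : V), isWriteAt E.ev b p x v ∨ isWriteAt E.ev b q x v) →
      causalHG G E.ev a b ∨ causalHG G E.ev b a) := by
  constructor
  · refine ⟨hg_irrefl E, fun a b c h1 h2 => h1.trans h2,
      fun a b h => Relation.TransGen.single (Or.inl h), ?_, ?_⟩
    · -- every read of `some v` reads from a latest causally preceding write
      intro t p x v ht
      have hval : E.val t p x = some v := (E.readsLocal t p x (some v) ht).symm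
      obtain ⟨s, q2, hs, hev, hlast⟩ := valSome E t p x v hval
      obtain ⟨w, hw⟩ := E.validity s p q2 x v hev
      refine ⟨w, q2, hw,
        Relation.TransGen.single (Or.inr (Or.inl ⟨q2, p, x, v, hw, ht⟩)), ?_⟩
      rintro ⟨w', q', v', hw', h1, h2⟩
      have hk0 : Known E (q2, x, v) w := Or.inr ⟨q2, x, v, hw, Or.inl rfl⟩
      have hk1 := hg_known E h1 hk0
      have hk1' : (⟨q2, x, v⟩ : Msg P X V) = (q', x, v') ∨
          SDB E.ev (q2, x, v) (q', x, v') := by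
        rcases hk1 with ⟨p', x'', vv'', hev', _⟩ | ⟨p', x'', v'', hev', hin⟩
        · rw [hw'] at hev'; simp at hev'
        · rw [hw'] at hev'
          simp only [Option.some.injEq, AEvent.invWrite.injEq] at hev'
          obtain ⟨rfl, rfl, rfl⟩ := hev'
          exact hin
      rcases hk1' with heq | hsdb
      · simp only [Prod.mk.injEq] at heq
        obtain ⟨h1', -, h3'⟩ := heq
        subst h1'; subst h3'
        obtain ⟨-, -, hww⟩ := bcast_unique E hw hw'
        subst hww
        exact hg_irrefl E w h1
      · have hk2 : Known E (q', x, v') t :=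
          hg_known E h2 (Or.inr ⟨q', x, v', hw', Or.inl rfl⟩)
        obtain ⟨s2, hs2, hd2⟩ : ∃ s2, s2 < t ∧ dM E.ev p (q', x, v') s2 := by
          rcases hk2 with ⟨p', x'', vv'', hev', s2, hs2, hd2⟩ | ⟨p', x'', v'', hev', _⟩
          · rw [ht] at hev'
            simp only [Option.some.injEq, AEvent.read.injEq] at hev'
            obtain ⟨rfl, rfl, rfl⟩ := hev'
            exact ⟨s2, hs2, hd2⟩
          · rw [ht] at hev'; simp at hev'
        have hss2 : s < s2 := hsdb.2.2 p s s2 hev hd2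
        exact hlast s2 q' v' hss2 hs2 hd2
    · -- no write to `x` causally precedes a read of `⊥`
      intro t p x ht
      rintro ⟨w, q, v, hw, h⟩
      have hval : E.val t p x = none := (E.readsLocal t p x none ht).symm
      have hk := hg_known E h (Or.inr ⟨q, x, v, hw, Or.inl rfl⟩)
      obtain ⟨s, hs, hd⟩ : ∃ s, s < t ∧ dM E.ev p (q, x, v) s := by
        rcases hk with ⟨p', x'', vv'', hev', s, hs, hd⟩ | ⟨p', x'', v'', hev', _⟩
        · rw [ht] at hev'
          simp only [Option.some.injEq, AEvent.read.injEq] at hev'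
          obtain ⟨rfl, rfl, rfl⟩ := hev'
          exact ⟨s, hs, hd⟩
        · rw [ht] at hev'; simp at hev'
      have hsome : (E.val (s + 1) p x).isSome := by
        rw [E.valDeliv s p q x v hd]; rfl
      have hmono := val_isSome_mono E t (s + 1) (by omega) hsome
      rw [hval] at hmono
      simp at hmono
  · -- totality on writes of `G`-neighboring processes
    intro p q adj a b hne ha hb
    obtain ⟨xa, va, hA⟩ := ha
    obtain ⟨xb, vb, hB⟩ := hb
    rcases hA with hA | hA <;> rcases hB with hB | hB
    · exact same_writer E hne hA hB
    · exact cross_writes E adj hne hA hB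
    · exact cross_writes E adj.symm hne hA hB
    · exact same_writer E hne hA hB

end FisheyeReg
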